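/- Let h ≥ 1 and let 𝒱 be the largest output-nulling subspace contained in 𝒮_h (i.e., the sum of all output-nulling subspaces contained in 𝒮_h). Then 𝒱 is a reachability subspace: for every friend F of 𝒱, the smallest (A+BF)-invariant subspace containing 𝒱 ∩ B(ker D) equals 𝒱. -/
import Mathlib


open Matrix Submodule

/-- The Rosenbrock matrix `[[A - λI, B], [C, D]]`. -/
noncomputable def rosenbrock {n m p : ℕ} (A : Matrix (Fin n) (Fin n) ℂ)
    (B : Matrix (Fin n) (Fin m) ℂ) (C : Matrix (Fin p) (Fin n) ℂ)
    (D : Matrix (Fin p) (Fin m) ℂ) (lam : ℂ) :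
    Matrix (Fin n ⊕ Fin p) (Fin n ⊕ Fin m) ℂ :=
  Matrix.fromBlocks (A - lam • 1) B C D

/-- `λ` is an invariant zero of `(A,B,C,D)` if the rank of the Rosenbrock matrix at `λ`
is strictly smaller than its normal rank (the max over `μ` of the rank at `μ`). -/
noncomputable def IsInvariantZero {n m p : ℕ} (A : Matrix (Fin n) (Fin n) ℂ)
    (B : Matrix (Fin n) (Fin m) ℂ) (C : Matrix (Fin p) (Fin n) ℂ)
    (D : Matrix (Fin p) (Fin m) ℂ) (lam : ℂ) : Prop :=
  (rosenbrock A B C D lam).rank < ⨆ μ : ℂ, (rosenbrock A B C D μ).rank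

/-- The Rosenbrock pencil subspace `W(λ) = {x | ∃ u, (A - λI)x + Bu = 0 ∧ Cx + Du = 0}`. -/
noncomputable def rosSub {n m p : ℕ} (A : Matrix (Fin n) (Fin n) ℂ)
    (B : Matrix (Fin n) (Fin m) ℂ) (C : Matrix (Fin p) (Fin n) ℂ)
    (D : Matrix (Fin p) (Fin m) ℂ) (lam : ℂ) : Submodule ℂ (Fin n → ℂ) :=
  Submodule.map (LinearMap.fst ℂ (Fin n → ℂ) (Fin m → ℂ))
    (LinearMap.ker ((((A - lam • 1).mulVecLin).coprod B.mulVecLin).prod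
      ((C.mulVecLin).coprod D.mulVecLin)))

/-- A subspace `𝒱` is output-nulling if it has a friend `F`, i.e.
`(A + BF) 𝒱 ⊆ 𝒱` and `𝒱 ⊆ ker (C + DF)`. -/
def IsOutputNulling {n m p : ℕ} (A : Matrix (Fin n) (Fin n) ℂ)
    (B : Matrix (Fin n) (Fin m) ℂ) (C : Matrix (Fin p) (Fin n) ℂ)
    (D : Matrix (Fin p) (Fin m) ℂ) (V : Submodule ℂ (Fin n → ℂ)) : Prop :=
  ∃ F : Matrix (Fin m) (Fin n) ℂ,
    (∀ x ∈ V, (A + B * F).mulVecLin x ∈ V) ∧ V ≤ LinearMap.ker (C + D * F).mulVecLin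

/-- The largest output-nulling subspace `𝒱*`. -/
noncomputable def vStar {n m p : ℕ} (A : Matrix (Fin n) (Fin n) ℂ)
    (B : Matrix (Fin n) (Fin m) ℂ) (C : Matrix (Fin p) (Fin n) ℂ)
    (D : Matrix (Fin p) (Fin m) ℂ) : Submodule ℂ (Fin n → ℂ) :=
  sSup {V : Submodule ℂ (Fin n → ℂ) | IsOutputNulling A B C D V}

/-- The input-containing sequence: `𝒮_0 = 0`,
`𝒮_{j+1} = {Ax + Bu : x ∈ 𝒮_j, Cx + Du = 0}`. -/
noncomputable def sSeq {n m p : ℕ} (A : Matrix (Fin n) (Fin n) ℂ)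
    (B : Matrix (Fin n) (Fin m) ℂ) (C : Matrix (Fin p) (Fin n) ℂ)
    (D : Matrix (Fin p) (Fin m) ℂ) : ℕ → Submodule ℂ (Fin n → ℂ)
  | 0 => ⊥
  | (j + 1) => Submodule.map ((A.mulVecLin).coprod B.mulVecLin)
      (((sSeq A B C D j).prod ⊤) ⊓ LinearMap.ker ((C.mulVecLin).coprod D.mulVecLin))

/-- Diagonalizable endomorphism: the eigenspaces span the whole space. -/
def IsDiagonalizable {M : Type*} [AddCommGroup M] [Module ℂ M]
    (f : M →ₗ[ℂ] M) : Prop :=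
  (⨆ μ : ℂ, Module.End.eigenspace f μ) = ⊤


-- auxiliary: extension of a matrix-induced map prescribing a value outside V
lemma exists_friend_ext {n m : ℕ} (V : Submodule ℂ (Fin n → ℂ))
    (F : Matrix (Fin m) (Fin n) ℂ) (y : Fin n → ℂ) (u : Fin m → ℂ) (hy : y ∉ V) :
    ∃ F' : Matrix (Fin m) (Fin n) ℂ,
      (∀ v ∈ V, F'.mulVecLin v = F.mulVecLin v) ∧ F'.mulVecLin y = u := by
  set f : (Fin n → ℂ) →ₗ.[ℂ] (Fin m → ℂ) := ⟨V, F.mulVecLin.comp V.subtype⟩ with hf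
  have hy' : y ∉ f.domain := hy
  set g := f.supSpanSingleton y u hy' with hg
  obtain ⟨G, hG⟩ := g.toFun.exists_extend
  refine ⟨LinearMap.toMatrix' G, ?_, ?_⟩
  · intro v hv
    have hvd : v ∈ g.domain := le_sup_left (α := Submodule ℂ (Fin n → ℂ)) hv
    have h1 : G v = g ⟨v, hvd⟩ := by
      have := congrArg (fun L => L ⟨v, hvd⟩) hG
      simpa using this
    have h2 : g ⟨v, hvd⟩ = F.mulVecLin v := by
      have hmv : v + (0:ℂ) • y ∈ g.domain := by simpa using hvd
      have e : (⟨v, hvd⟩ : g.domain) = ⟨v + (0:ℂ) • y, hmv⟩ := Subtype.ext (by simp)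
      have key := f.supSpanSingleton_apply_mk y u hy' v hv 0
      rw [e]
      exact key.trans (show F.mulVecLin v + (0:ℂ) • u = F.mulVecLin v by simp)
    have hGG : (LinearMap.toMatrix' G).mulVecLin = G := by
      rw [← Matrix.toLin'_apply']; exact Matrix.toLin'_toMatrix' G
    show (LinearMap.toMatrix' G).mulVecLin v = F.mulVecLin v
    rw [hGG, h1, h2]
  · have hyd : y ∈ g.domain := by
      refine le_sup_right (α := Submodule ℂ (Fin n → ℂ)) ?_
      exact mem_span_singleton_self y
    have h1 : G y = g ⟨y, hyd⟩ := by
      have := congrArg (fun L => L ⟨y, hyd⟩) hG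
      simpa using this
    have h2 : g ⟨y, hyd⟩ = u := by
      have hmy : (0:Fin n → ℂ) + (1:ℂ) • y ∈ g.domain := by simpa using hyd
      have e : (⟨y, hyd⟩ : g.domain) = ⟨(0:Fin n → ℂ) + (1:ℂ) • y, hmy⟩ := Subtype.ext (by simp)
      have key := f.supSpanSingleton_apply_mk y u hy' 0 V.zero_mem 1
      rw [e]
      exact key.trans (show F.mulVecLin 0 + (1:ℂ) • u = u by simp)
    have hGG : (LinearMap.toMatrix' G).mulVecLin = G := by
      rw [← Matrix.toLin'_apply']; exact Matrix.toLin'_toMatrix' G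
    show (LinearMap.toMatrix' G).mulVecLin y = u
    rw [hGG, h1, h2]

lemma sSeq_mono {n m p : ℕ} (A : Matrix (Fin n) (Fin n) ℂ)
    (B : Matrix (Fin n) (Fin m) ℂ) (C : Matrix (Fin p) (Fin n) ℂ)
    (D : Matrix (Fin p) (Fin m) ℂ) : Monotone (sSeq A B C D) := by
  apply monotone_nat_of_le_succ
  intro j
  induction j with
  | zero => simp [sSeq]
  | succ k ih =>
      show sSeq A B C D (k+1) ≤ sSeq A B C D (k+2)
      rw [sSeq, sSeq]
      exact Submodule.map_mono (inf_le_inf_right _ (Submodule.prod_mono ih le_rfl))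

theorem largest_output_nulling_in_sSeq_is_reachability (n m p : ℕ)
    (hn : 0 < n) (hm : 0 < m) (hp : 0 < p)
    (A : Matrix (Fin n) (Fin n) ℂ) (B : Matrix (Fin n) (Fin m) ℂ)
    (C : Matrix (Fin p) (Fin n) ℂ) (D : Matrix (Fin p) (Fin m) ℂ)
    (h : ℕ) (hh : 1 ≤ h)
    (V : Submodule ℂ (Fin n → ℂ))
    (hV : V = sSup {W : Submodule ℂ (Fin n → ℂ) |
      IsOutputNulling A B C D W ∧ W ≤ sSeq A B C D h}) :
    ∀ F : Matrix (Fin m) (Fin n) ℂ,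
      (∀ x ∈ V, (A + B * F).mulVecLin x ∈ V) →
      V ≤ LinearMap.ker (C + D * F).mulVecLin →
      sInf {W : Submodule ℂ (Fin n → ℂ) |
          V ⊓ Submodule.map B.mulVecLin (LinearMap.ker D.mulVecLin) ≤ W ∧
          Submodule.map (A + B * F).mulVecLin W ≤ W} = V := by
  intro F hFinv hFker
  have hTapp : ∀ (F₀ : Matrix (Fin m) (Fin n) ℂ) (z : Fin n → ℂ),
      (A + B * F₀).mulVecLin z = A.mulVecLin z + B.mulVecLin (F₀.mulVecLin z) := by
    intro F₀ z
    simp [Matrix.mulVecLin_add, Matrix.mulVecLin_mul]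
  have hCapp : ∀ (F₀ : Matrix (Fin m) (Fin n) ℂ) (z : Fin n → ℂ),
      (C + D * F₀).mulVecLin z = C.mulVecLin z + D.mulVecLin (F₀.mulVecLin z) := by
    intro F₀ z
    simp [Matrix.mulVecLin_add, Matrix.mulVecLin_mul]
  set Sset : Set (Submodule ℂ (Fin n → ℂ)) := {W : Submodule ℂ (Fin n → ℂ) |
      V ⊓ Submodule.map B.mulVecLin (LinearMap.ker D.mulVecLin) ≤ W ∧
      Submodule.map (A + B * F).mulVecLin W ≤ W} with hSset
  set R := sInf Sset with hR
  have hRV : R ≤ V := by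
    apply sInf_le
    refine ⟨inf_le_left, ?_⟩
    rw [Submodule.map_le_iff_le_comap]
    intro x hx
    exact Submodule.mem_comap.mpr (hFinv x hx)
  have hGR : V ⊓ Submodule.map B.mulVecLin (LinearMap.ker D.mulVecLin) ≤ R :=
    le_sInf fun W hW => hW.1
  have hRinv : Submodule.map (A + B * F).mulVecLin R ≤ R :=
    le_sInf fun W hW => (Submodule.map_mono (sInf_le hW)).trans hW.2
  have hVS : V ≤ sSeq A B C D h := by
    rw [hV]; exact sSup_le fun W hW => hW.2
  -- Key induction
  have key : ∀ j, j ≤ h → ∀ x ∈ V, x ∈ sSeq A B C D j → x ∈ R := by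
    intro j
    induction j with
    | zero =>
        intro _ x _ hxS
        rw [sSeq] at hxS
        rw [Submodule.mem_bot] at hxS
        subst hxS
        exact R.zero_mem
    | succ j ih =>
        intro hj1 x hxV hxS
        have hj : j ≤ h := Nat.le_of_succ_le hj1
        rw [sSeq] at hxS
        rw [Submodule.mem_map] at hxS
        obtain ⟨⟨y, u⟩, hyu, hsum⟩ := hxS
        rw [Submodule.mem_inf] at hyu
        obtain ⟨hprod, hker⟩ := hyu
        have hyS : y ∈ sSeq A B C D j := hprod.1
        have hCDyu : C.mulVecLin y + D.mulVecLin u = 0 := by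
          have := hker
          rw [LinearMap.mem_ker] at this
          simpa [LinearMap.coprod_apply] using this
        have hxsum : A.mulVecLin y + B.mulVecLin u = x := by
          simpa [LinearMap.coprod_apply] using hsum
        -- first, y ∈ V
        have hyV : y ∈ V := by
          by_cases hyV : y ∈ V
          · exact hyV
          · exfalso
            obtain ⟨F', hF'V, hF'y⟩ := exists_friend_ext V F y u hyV
            set W := V ⊔ (ℂ ∙ y) with hW
            have hWmem : W ∈ {W : Submodule ℂ (Fin n → ℂ) |
                IsOutputNulling A B C D W ∧ W ≤ sSeq A B C D h} := by
              constructor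
              · refine ⟨F', ?_, ?_⟩
                · intro z hz
                  rw [hW, Submodule.mem_sup] at hz
                  obtain ⟨v, hv, w, hw, rfl⟩ := hz
                  rw [Submodule.mem_span_singleton] at hw
                  obtain ⟨c, rfl⟩ := hw
                  have heq : (A + B * F').mulVecLin (v + c • y)
                      = (A + B * F).mulVecLin v + c • x := by
                    rw [map_add, LinearMap.map_smul, hTapp, hTapp, hTapp, hF'V v hv, hF'y,
                      hxsum]
                  rw [heq]
                  exact Submodule.mem_sup_left
                    (Submodule.add_mem V (hFinv v hv) (Submodule.smul_mem V c hxV))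
                · intro z hz
                  rw [hW, Submodule.mem_sup] at hz
                  obtain ⟨v, hv, w, hw, rfl⟩ := hz
                  rw [Submodule.mem_span_singleton] at hw
                  obtain ⟨c, rfl⟩ := hw
                  rw [LinearMap.mem_ker, map_add, LinearMap.map_smul, hCapp, hCapp,
                    hF'V v hv, hF'y]
                  have h1 : C.mulVecLin v + D.mulVecLin (F.mulVecLin v) = 0 := by
                    have := hFker hv
                    rw [LinearMap.mem_ker] at this
                    rw [← hCapp]; exact this
                  rw [h1, hCDyu]
                  simp
              · rw [hW]
                refine sup_le hVS ?_
                rw [Submodule.span_le, Set.singleton_subset_iff]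
                exact sSeq_mono A B C D hj hyS
            have hWV : W ≤ V := by
              rw [hV]
              exact le_sSup hWmem
            exact hyV (hWV (Submodule.mem_sup_right
              (Submodule.mem_span_singleton_self y)))
        -- now conclude x ∈ R
        have hyR : y ∈ R := ih hj y hyV hyS
        have hTyR : (A + B * F).mulVecLin y ∈ R :=
          hRinv (Submodule.mem_map_of_mem hyR)
        have hdiff : x - (A + B * F).mulVecLin y
            = B.mulVecLin (u - F.mulVecLin y) := by
          rw [hTapp, ← hxsum, map_sub]
          abel
        have hDdiff : D.mulVecLin (u - F.mulVecLin y) = 0 := by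
          have h2 : C.mulVecLin y + D.mulVecLin (F.mulVecLin y) = 0 := by
            have := hFker hyV
            rw [LinearMap.mem_ker] at this
            rw [← hCapp]; exact this
          rw [map_sub]
          have e1 : D.mulVecLin u = -(C.mulVecLin y) := by
            linear_combination (norm := module) hCDyu
          have e2 : D.mulVecLin (F.mulVecLin y) = -(C.mulVecLin y) := by
            linear_combination (norm := module) h2
          rw [e1, e2]; simp
        have hdiffR : x - (A + B * F).mulVecLin y ∈ R := by
          apply hGR
          rw [Submodule.mem_inf]
          constructor
          · exact Submodule.sub_mem V hxV (hFinv y hyV)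
          · rw [hdiff]
            exact Submodule.mem_map_of_mem (LinearMap.mem_ker.mpr hDdiff)
        have := Submodule.add_mem R hTyR hdiffR
        simpa using this
  refine le_antisymm hRV ?_
  intro x hx
  exact key h le_rfl x hx (hVS hx)
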